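/- Let k be a positive integer, α ∈ (0,1], (a,b) ⊆ ℝ a bounded interval, f : (a,b) → ℝ continuous, and g ∈ C^{k,α}((a,b)). Assume |f(x)|^{k+α} = |g(x)| for every x ∈ (a,b) and g(x)·g'(x) ≠ 0 for every x ∈ (a,b). Set H = Höld_α(g^{(k)}, (a,b)) and let p be defined by 1/p + 1/(k+α) = 1. Then there exists a constant C₂(k), depending only on k, such that ‖f'‖_{p,w,(a,b)} ≤ C₂(k) · max{ H^{1/(k+α)} · (b-a)^{1/p}, ‖g'‖_{L^∞((a,b))}^{1/(k+α)} }. -/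

import Mathlib

open MeasureTheory Set
open scoped ENNReal NNReal

/-- The weak `L^p` quasinorm of `ψ` over `Ω ⊆ ℝ`:
`sup_{M ≥ 0} M · (meas {x ∈ Ω : |ψ(x)| > M})^(1/p)`. -/
noncomputable def weakLpNorm (p : ℝ) (Ω : Set ℝ) (ψ : ℝ → ℝ) : ℝ≥0∞ :=
  ⨆ M : ℝ≥0, (M : ℝ≥0∞) * (volume {x | x ∈ Ω ∧ (M : ℝ) < |ψ x|}) ^ (1 / p)

/-- A continuous nowhere-vanishing function on an order-connected set has constant sign. -/
lemma aux_sign_const {s : Set ℝ} (hs : s.OrdConnected) {h : ℝ → ℝ}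
    (hc : ContinuousOn h s) (hne : ∀ x ∈ s, h x ≠ 0) :
    (∀ x ∈ s, 0 < h x) ∨ (∀ x ∈ s, h x < 0) := by
  by_contra hcon
  push_neg at hcon
  obtain ⟨⟨x, hx, hx0⟩, ⟨y, hy, hy0⟩⟩ := hcon
  have hsub : uIcc x y ⊆ s := hs.uIcc_subset hx hy
  have h0 : (0 : ℝ) ∈ uIcc (h x) (h y) := by
    rw [Set.mem_uIcc]; exact Or.inl ⟨hx0, hy0⟩
  obtain ⟨z, hz, hz0⟩ := intermediate_value_uIcc (hc.mono hsub) h0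
  exact hne z (hsub hz) hz0

set_option maxHeartbeats 1000000 in
/-- **Weak `L^p` estimate on the derivative of the root (Proposition, part 2).**
Let `f` be continuous on `(a,b)` and `g ∈ C^{k,α}((a,b))` with `|f|^(k+α) = |g|` and
`g·g' ≠ 0` on `(a,b)`; let `H` be an `α`-Hölder constant for `g^(k)`, `G` a bound for
`|g'|` on `(a,b)`, and `1/p + 1/(k+α) = 1`. Then, for a constant `C₂(k)` depending
only on `k`,
`‖f'‖_{p,w,(a,b)} ≤ C₂(k) · max { H^(1/(k+α)) · (b-a)^(1/p), G^(1/(k+α)) }`. -/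
theorem weak_lp_estimate_root_derivative (k : ℕ) (hk : 0 < k) :
    ∃ C₂ : ℝ, ∀ α : ℝ, α ∈ Set.Ioc (0 : ℝ) 1 → ∀ a b : ℝ, a < b →
      ∀ f g : ℝ → ℝ,
      ContinuousOn f (Ioo a b) →
      ContDiffOn ℝ (k : ℕ∞) g (Ioo a b) →
      (∀ i : ℕ, i ≤ k → ∃ B : ℝ, ∀ x ∈ Ioo a b,
        |iteratedDerivWithin i g (Ioo a b) x| ≤ B) →
      ∀ H : ℝ, 0 ≤ H →
      (∀ x ∈ Ioo a b, ∀ y ∈ Ioo a b,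
        |iteratedDerivWithin k g (Ioo a b) y - iteratedDerivWithin k g (Ioo a b) x|
          ≤ H * |y - x| ^ α) →
      ∀ G : ℝ, 0 ≤ G →
      (∀ x ∈ Ioo a b, |derivWithin g (Ioo a b) x| ≤ G) →
      (∀ x ∈ Ioo a b, |f x| ^ ((k : ℝ) + α) = |g x|) →
      (∀ x ∈ Ioo a b, g x * derivWithin g (Ioo a b) x ≠ 0) →
      ∀ p : ℝ, 1 / p + 1 / ((k : ℝ) + α) = 1 →
      weakLpNorm p (Ioo a b) (deriv f) ≤
        ENNReal.ofReal (C₂ * max (H ^ (1 / ((k : ℝ) + α)) * (b - a) ^ (1 / p))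
          (G ^ (1 / ((k : ℝ) + α)))) := by
  refine ⟨1, ?_⟩
  rintro α ⟨hα0, hα1⟩ a b hab f g hf hg hbnd H hH hHold G hGnn hGle hfg hne p hp
  set β : ℝ := (k : ℝ) + α with hβdef
  have hk1 : (1 : ℝ) ≤ (k : ℝ) := by exact_mod_cast hk
  have hβ1 : 1 < β := by simp only [hβdef]; linarith
  have hβ0 : (0 : ℝ) < β := by linarith
  -- facts about p
  have hβinv : 0 < 1 / β := by positivity
  have hβinv1 : 1 / β < 1 := by rw [div_lt_one hβ0]; linarith
  have hpinv : 1 / p = 1 - 1 / β := by linarith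
  have hpinv0 : 0 < 1 / p := by rw [hpinv]; linarith
  have hp0 : 0 < p := by
    by_contra hcon
    push_neg at hcon
    rcases eq_or_lt_of_le hcon with h | h
    · have h' : (1:ℝ)/p = 0 := by rw [h]; simp
      rw [h'] at hpinv; linarith
    · have := one_div_neg.mpr h; linarith
  have hp1 : 1 < p := by
    have := (div_lt_one hp0).mp (by linarith : 1 / p < 1)
    linarith
  have he : p * (1 / β) = p - 1 := by
    have h1 : p * (1 / p) = 1 := by field_simp
    nlinarith [hp]
  have hop : IsOpen (Ioo a b) := isOpen_Ioo
  set x₀ : ℝ := (a + b) / 2 with hx₀def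
  have hx₀ : x₀ ∈ Ioo a b := ⟨by simp only [hx₀def]; linarith, by simp only [hx₀def]; linarith⟩
  set D : ℝ → ℝ := derivWithin g (Ioo a b) with hDdef
  have hgne : ∀ x ∈ Ioo a b, g x ≠ 0 := fun x hx => left_ne_zero_of_mul (hne x hx)
  have hDne : ∀ x ∈ Ioo a b, D x ≠ 0 := fun x hx => right_ne_zero_of_mul (hne x hx)
  have hfne : ∀ x ∈ Ioo a b, f x ≠ 0 := by
    intro x hx hfx
    have h1 := hfg x hx
    rw [hfx, abs_zero, Real.zero_rpow hβ0.ne'] at h1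
    exact hgne x hx (abs_eq_zero.mp h1.symm)
  -- signs
  obtain ⟨η, hη, hηg⟩ : ∃ η : ℝ, (η = 1 ∨ η = -1) ∧ ∀ x ∈ Ioo a b, 0 < η * g x := by
    rcases aux_sign_const Set.ordConnected_Ioo hg.continuousOn hgne with h | h
    · exact ⟨1, Or.inl rfl, fun x hx => by simpa using h x hx⟩
    · exact ⟨-1, Or.inr rfl, fun x hx => by simpa using neg_pos.mpr (h x hx)⟩
  obtain ⟨ε, hε, hεf⟩ : ∃ ε : ℝ, (ε = 1 ∨ ε = -1) ∧ ∀ x ∈ Ioo a b, 0 < ε * f x := by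
    rcases aux_sign_const Set.ordConnected_Ioo hf hfne with h | h
    · exact ⟨1, Or.inl rfl, fun x hx => by simpa using h x hx⟩
    · exact ⟨-1, Or.inr rfl, fun x hx => by simpa using neg_pos.mpr (h x hx)⟩
  have hεabs : |ε| = 1 := by rcases hε with h | h <;> simp [h]
  -- u and its derivative
  set u : ℝ → ℝ := fun x => η * g x with hudef
  set u' : ℝ → ℝ := fun x => η * D x with hu'def
  have hupos : ∀ x ∈ Ioo a b, 0 < u x := hηg
  have hgabs : ∀ x ∈ Ioo a b, |g x| = u x := by
    intro x hx
    have hpos := hηg x hx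
    show |g x| = η * g x
    rcases hη with h | h
    · rw [h, one_mul] at hpos ⊢; exact abs_of_pos hpos
    · rw [h] at hpos ⊢
      have hgneg : g x < 0 := by nlinarith
      rw [abs_of_neg hgneg]; ring
  have hk1' : (1 : ℕ∞) ≤ (k : ℕ∞) := by
    exact_mod_cast Nat.one_le_iff_ne_zero.mpr hk.ne'
  have hk1'' : (1 : WithTop ℕ∞) ≤ ((k : ℕ∞) : WithTop ℕ∞) := by
    exact_mod_cast hk1'
  have hgd : ∀ x ∈ Ioo a b, HasDerivAt g (D x) x := by
    intro x hx
    have hgdiff : DifferentiableOn ℝ g (Ioo a b) := hg.differentiableOn (by positivity)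
    have h1 : DifferentiableWithinAt ℝ g (Ioo a b) x := hgdiff x hx
    have h2 : DifferentiableAt ℝ g x := h1.differentiableAt (hop.mem_nhds hx)
    have h3 := h2.hasDerivAt
    rwa [← derivWithin_of_isOpen hop hx] at h3
  have hud : ∀ x ∈ Ioo a b, HasDerivAt u (u' x) x := fun x hx => (hgd x hx).const_mul η
  have hu'ne : ∀ x ∈ Ioo a b, u' x ≠ 0 := by
    intro x hx
    have : η ≠ 0 := by rcases hη with h | h <;> simp [h]
    exact mul_ne_zero this (hDne x hx)
  have hu'abs : ∀ x ∈ Ioo a b, |u' x| ≤ G := by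
    intro x hx
    have : |u' x| = |D x| := by
      simp only [hu'def, abs_mul]
      rcases hη with h | h <;> simp [h]
    rw [this]; exact hGle x hx
  have hDcont : ContinuousOn D (Ioo a b) :=
    hg.continuousOn_derivWithin hop.uniqueDiffOn hk1''
  have hu'cont : ContinuousOn u' (Ioo a b) := continuousOn_const.mul hDcont
  have hucont : ContinuousOn u (Ioo a b) := continuousOn_const.mul hg.continuousOn
  have hu'sign := aux_sign_const Set.ordConnected_Ioo hu'cont hu'ne
  have humono : StrictMonoOn u (Ioo a b) ∨ StrictAntiOn u (Ioo a b) := by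
    rcases hu'sign with h | h
    · left
      apply strictMonoOn_of_deriv_pos (convex_Ioo a b) hucont
      intro x hx
      rw [interior_Ioo] at hx
      rw [(hud x hx).deriv]
      exact h x hx
    · right
      apply strictAntiOn_of_deriv_neg (convex_Ioo a b) hucont
      intro x hx
      rw [interior_Ioo] at hx
      rw [(hud x hx).deriv]
      exact h x hx
  have hGpos : 0 < G := lt_of_lt_of_le (abs_pos.mpr (hu'ne x₀ hx₀)) (hu'abs x₀ hx₀)
  -- Φ = u^{1/β} and its derivative
  set Φ : ℝ → ℝ := fun x => u x ^ (1 / β) with hΦdef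
  set Φ' : ℝ → ℝ := fun x => u' x * (1 / β) * u x ^ (1 / β - 1) with hΦ'def
  have hΦd : ∀ x ∈ Ioo a b, HasDerivAt Φ (Φ' x) x := fun x hx =>
    (hud x hx).rpow_const (Or.inl (hupos x hx).ne')
  have hfeq : ∀ x ∈ Ioo a b, f x = ε * Φ x := by
    intro x hx
    have h1 : (|f x| ^ β) ^ (1 / β) = |f x| := by
      rw [← Real.rpow_mul (abs_nonneg _), mul_one_div, div_self hβ0.ne', Real.rpow_one]
    have h2 : |f x| = Φ x := by
      rw [← h1, hfg x hx, hgabs x hx]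
    have h3 : ε * f x = |f x| := by
      have hpos := hεf x hx
      rcases hε with h | h
      · rw [h, one_mul] at hpos ⊢; exact (abs_of_pos hpos).symm
      · rw [h] at hpos ⊢
        have : f x < 0 := by nlinarith
        rw [abs_of_neg this]; ring
    have hε2 : ε * ε = 1 := by rcases hε with h | h <;> simp [h]
    calc f x = ε * (ε * f x) := by rw [← mul_assoc, hε2, one_mul]
      _ = ε * Φ x := by rw [h3, h2]
  have hderivf : ∀ x ∈ Ioo a b, deriv f x = ε * Φ' x := by
    intro x hx
    have hev : f =ᶠ[nhds x] fun y => ε * Φ y :=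
      Filter.eventually_of_mem (hop.mem_nhds hx) fun y hy => hfeq y hy
    rw [hev.deriv_eq]
    exact ((hΦd x hx).const_mul ε).deriv
  have habsΦ : ∀ x ∈ Ioo a b, |deriv f x| = |Φ' x| := by
    intro x hx
    rw [hderivf x hx, abs_mul, hεabs, one_mul]
  have hΦ'cont : ContinuousOn Φ' (Ioo a b) := by
    apply ContinuousOn.mul (hu'cont.mul continuousOn_const)
    exact hucont.rpow_const fun x hx => Or.inl (hupos x hx).ne'
  -- main estimate
  rw [weakLpNorm]
  apply iSup_le
  intro M
  by_cases hM : M = 0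
  · simp [hM]
  have hM0 : (0 : ℝ) < (M : ℝ) := by
    exact_mod_cast pos_iff_ne_zero.mpr hM
  set T : ℝ := (G / (β * M)) ^ (p : ℝ) with hTdef
  have hT0 : 0 < T := Real.rpow_pos_of_pos (by positivity) _
  set S : Set ℝ := {x | x ∈ Ioo a b ∧ u x < T} with hSdef
  set E : Set ℝ := {x | x ∈ Ioo a b ∧ (M : ℝ) < |deriv f x|} with hEdef
  have hMΦ : ∀ x ∈ E, (M : ℝ) < |Φ' x| := by
    rintro x ⟨hx, hMx⟩
    rwa [habsΦ x hx] at hMx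
  have hES : E ⊆ S := by
    rintro x ⟨hx, hMx⟩
    refine ⟨hx, ?_⟩
    have hu0 := hupos x hx
    have h1 : (M : ℝ) < |u' x| * (1 / β) * u x ^ (1 / β - 1) := by
      have h2 := hMΦ x ⟨hx, hMx⟩
      have h3 : |Φ' x| = |u' x| * (1 / β) * u x ^ (1 / β - 1) := by
        simp only [hΦ'def, abs_mul]
        rw [abs_of_pos (by positivity : (0:ℝ) < 1/β),
          abs_of_pos (Real.rpow_pos_of_pos hu0 _)]
      rwa [h3] at h2
    have h4 : (M : ℝ) < G * (1 / β) * u x ^ (1 / β - 1) := by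
      have hru : 0 < u x ^ (1 / β - 1) := Real.rpow_pos_of_pos hu0 _
      refine lt_of_lt_of_le h1 ?_
      have h4a : |u' x| * (1 / β) ≤ G * (1 / β) :=
        mul_le_mul_of_nonneg_right (hu'abs x hx) (by positivity)
      exact mul_le_mul_of_nonneg_right h4a hru.le
    have hexp : 1 / β - 1 = -(1 / p) := by linarith
    rw [hexp, Real.rpow_neg hu0.le] at h4
    have hupp : 0 < u x ^ (1 / p) := Real.rpow_pos_of_pos hu0 _
    have h5 : u x ^ (1 / p) < G / (β * M) := by
      rw [lt_div_iff₀ (by positivity)]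
      have h6 : (M : ℝ) * u x ^ (1 / p) < G * (1 / β) := by
        calc (M : ℝ) * u x ^ (1 / p) < G * (1 / β) * (u x ^ (1 / p))⁻¹ * u x ^ (1 / p) :=
              mul_lt_mul_of_pos_right h4 hupp
          _ = G * (1 / β) := by field_simp
      have h7 := mul_lt_mul_of_pos_left h6 hβ0
      calc u x ^ (1 / p) * (β * (M : ℝ)) = β * ((M : ℝ) * u x ^ (1 / p)) := by ring
        _ < β * (G * (1 / β)) := h7
        _ = G := by field_simp
    have h7 : (u x ^ (1 / p)) ^ p < (G / (β * M)) ^ p :=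
      Real.rpow_lt_rpow (Real.rpow_nonneg hu0.le _) h5 hp0
    rwa [← Real.rpow_mul hu0.le, one_div_mul_cancel hp0.ne', Real.rpow_one] at h7
  have hSsub : S ⊆ Ioo a b := fun x hx => hx.1
  have hSord : ∀ ⦃x⦄, x ∈ S → ∀ ⦃y⦄, y ∈ S → Icc x y ⊆ S := by
    rintro x ⟨hx, hxT⟩ y ⟨hy, hyT⟩ z hz
    have hzI : z ∈ Ioo a b := ⟨lt_of_lt_of_le hx.1 hz.1, lt_of_le_of_lt hz.2 hy.2⟩
    refine ⟨hzI, ?_⟩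
    rcases humono with h | h
    · exact lt_of_le_of_lt (h.monotoneOn hzI hy hz.2) hyT
    · exact lt_of_le_of_lt (h.antitoneOn hx hzI hz.1) hxT
  -- the key volume bound
  have key : volume E ≤ ENNReal.ofReal (T ^ (1 / β) / M) := by
    rcases Set.eq_empty_or_nonempty S with hSe | hSne
    · have : E = ∅ := Set.eq_empty_of_subset_empty (hSe ▸ hES)
      simp [this]
    set c : ℝ := sInf S with hcdef
    set d : ℝ := sSup S with hddef
    have hbddA : BddAbove S := ⟨b, fun x hx => (hSsub hx).2.le⟩
    have hbddB : BddBelow S := ⟨a, fun x hx => (hSsub hx).1.le⟩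
    have hcd : ∀ z ∈ Ioo c d, z ∈ S := by
      intro z hz
      obtain ⟨x, hxS, hxz⟩ := exists_lt_of_csInf_lt hSne hz.1
      obtain ⟨y, hyS, hzy⟩ := exists_lt_of_lt_csSup hSne hz.2
      exact hSord hxS hyS ⟨hxz.le, hzy.le⟩
    have hEsub : E ⊆ (E ∩ Ioo c d) ∪ {c, d} := by
      intro x hxE
      have hxS := hES hxE
      have h1 : c ≤ x := csInf_le hbddB hxS
      have h2 : x ≤ d := le_csSup hbddA hxS
      rcases eq_or_lt_of_le h1 with h1' | h1'
      · exact Or.inr (Or.inl h1'.symm)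
      rcases eq_or_lt_of_le h2 with h2' | h2'
      · exact Or.inr (Or.inr h2')
      · exact Or.inl ⟨hxE, h1', h2'⟩
    have hcd_zero : volume ({c, d} : Set ℝ) = 0 :=
      ((Set.finite_singleton d).insert c).measure_zero volume
    have hstep : volume E ≤ volume (E ∩ Ioo c d) := by
      calc volume E ≤ volume ((E ∩ Ioo c d) ∪ {c, d}) := measure_mono hEsub
        _ ≤ volume (E ∩ Ioo c d) + volume ({c, d} : Set ℝ) := measure_union_le _ _
        _ = volume (E ∩ Ioo c d) := by rw [hcd_zero, add_zero]
    refine le_trans hstep ?_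
    rcases le_or_gt d c with hdc | hcd'
    · have : E ∩ Ioo c d = ∅ := by rw [Set.Ioo_eq_empty (not_lt.mpr hdc)]; simp
      simp [this]
    -- exhaust Ioo c d by compact intervals
    set A : ℕ → Set ℝ := fun n =>
      (E ∩ Ioo c d) ∩ Icc (c + (d - c) / (n + 2)) (d - (d - c) / (n + 2)) with hAdef
    have hAmono : Monotone A := by
      intro n m hnm
      have hdiv : (d - c) / (m + 2) ≤ (d - c) / (n + 2) := by
        apply div_le_div_of_nonneg_left (by linarith) (by positivity)
        have : (n : ℝ) ≤ (m : ℝ) := by exact_mod_cast hnm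
        linarith
      apply Set.inter_subset_inter_right
      apply Set.Icc_subset_Icc <;> linarith
    have hAU : ⋃ n, A n = E ∩ Ioo c d := by
      apply Set.Subset.antisymm
      · exact Set.iUnion_subset fun n => Set.inter_subset_left
      · intro x hx
        have hx1 : c < x := hx.2.1
        have hx2 : x < d := hx.2.2
        set m : ℝ := min (x - c) (d - x) with hmdef
        have hm0 : 0 < m := lt_min (by linarith) (by linarith)
        obtain ⟨n, hn⟩ := exists_nat_gt ((d - c) / m)
        have hdn : (d - c) / (n + 2) ≤ m := by
          rw [div_le_iff₀ (by positivity)]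
          rw [div_lt_iff₀ hm0] at hn
          nlinarith
        refine Set.mem_iUnion.mpr ⟨n, hx, ?_, ?_⟩
        · have : m ≤ x - c := min_le_left _ _
          linarith
        · have : m ≤ d - x := min_le_right _ _
          linarith
    rw [← hAU, Directed.measure_iUnion hAmono.directed_le]
    apply iSup_le
    intro n
    set cn : ℝ := c + (d - c) / (n + 2) with hcndef
    set dn : ℝ := d - (d - c) / (n + 2) with hdndef
    rcases le_or_gt cn dn with hle | hlt
    swap
    · have : A n = ∅ := by
        rw [hAdef]; simp only
        rw [Set.Icc_eq_empty (not_le.mpr hlt)]; simp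
      simp [this]
    have hpos2 : 0 < (d - c) / ((n : ℝ) + 2) := div_pos (by linarith) (by positivity)
    have hsub1 : Icc cn dn ⊆ Ioo c d :=
      Set.Icc_subset_Ioo (by simp only [hcndef]; linarith) (by simp only [hdndef]; linarith)
    have hsubS : Icc cn dn ⊆ S := fun x hx => hcd x (hsub1 hx)
    have hsubI : Icc cn dn ⊆ Ioo a b := fun x hx => (hsubS hx).1
    have hcnS : cn ∈ S := hsubS (Set.left_mem_Icc.mpr hle)
    have hdnS : dn ∈ S := hsubS (Set.right_mem_Icc.mpr hle)
    -- Markov inequality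
    have haem : AEMeasurable (fun x => ENNReal.ofReal |Φ' x|)
        (volume.restrict (Icc cn dn)) := by
      apply ENNReal.measurable_ofReal.comp_aemeasurable
      exact ((hΦ'cont.mono hsubI).abs).aemeasurable measurableSet_Icc
    have hmarkov := mul_meas_ge_le_lintegral₀ haem (ENNReal.ofReal (M : ℝ))
    have hA_sub : A n ⊆ {x | ENNReal.ofReal (M : ℝ) ≤ ENNReal.ofReal (|Φ' x|)} := by
      rintro x ⟨⟨hxE, _⟩, _⟩
      exact ENNReal.ofReal_le_ofReal (hMΦ x hxE).le
    have hAIcc : A n ⊆ Icc cn dn := Set.inter_subset_right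
    have hstep2 : ENNReal.ofReal (M : ℝ) * volume (A n) ≤
        ∫⁻ x in Icc cn dn, ENNReal.ofReal |Φ' x| := by
      refine le_trans ?_ hmarkov
      apply mul_le_mul_right
      calc volume (A n) = volume.restrict (Icc cn dn) (A n) := by
            rw [Measure.restrict_apply' measurableSet_Icc,
              Set.inter_eq_self_of_subset_left hAIcc]
        _ ≤ volume.restrict (Icc cn dn) {x | ENNReal.ofReal (M : ℝ) ≤ ENNReal.ofReal (|Φ' x|)} :=
            measure_mono hA_sub
    -- compute the integral
    have hintg : IntegrableOn (fun x => |Φ' x|) (Icc cn dn) :=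
      (ContinuousOn.integrableOn_compact isCompact_Icc ((hΦ'cont.mono hsubI).abs))
    have hlint : ∫⁻ x in Icc cn dn, ENNReal.ofReal |Φ' x| =
        ENNReal.ofReal (∫ x in Icc cn dn, |Φ' x|) :=
      (ofReal_integral_eq_lintegral_ofReal hintg
        (Filter.Eventually.of_forall fun x => abs_nonneg _)).symm
    have huIcc : uIcc cn dn = Icc cn dn := uIcc_of_le hle
    have hΦint : IntervalIntegrable Φ' volume cn dn := by
      apply ContinuousOn.intervalIntegrable
      rw [huIcc]
      exact hΦ'cont.mono hsubI
    have hftc : ∫ x in cn..dn, Φ' x = Φ dn - Φ cn := by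
      apply intervalIntegral.integral_eq_sub_of_hasDerivAt
      · intro x hx
        rw [huIcc] at hx
        exact hΦd x (hsubI hx)
      · exact hΦint
    have hΦ_lt : ∀ x ∈ S, Φ x ≤ T ^ (1 / β) := by
      rintro x ⟨hx, hxT⟩
      exact Real.rpow_le_rpow (hupos x hx).le hxT.le (by positivity)
    have hΦ_nn : ∀ x ∈ Ioo a b, 0 ≤ Φ x := fun x hx =>
      (Real.rpow_pos_of_pos (hupos x hx) _).le
    have hIle : ∫ x in Icc cn dn, |Φ' x| ≤ T ^ (1 / β) := by
      rw [MeasureTheory.integral_Icc_eq_integral_Ioc,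
        ← intervalIntegral.integral_of_le hle]
      rcases hu'sign with hsig | hsig
      · have hcongr : ∀ x ∈ uIcc cn dn, |Φ' x| = Φ' x := by
          intro x hx
          rw [huIcc] at hx
          have hxI := hsubI hx
          apply abs_of_nonneg
          have h1 : 0 < u' x := hsig x hxI
          have h2 : 0 < u x ^ (1 / β - 1) := Real.rpow_pos_of_pos (hupos x hxI) _
          simp only [hΦ'def]
          positivity
        rw [intervalIntegral.integral_congr hcongr, hftc]
        have := hΦ_lt dn hdnS
        have := hΦ_nn cn (hsubI (Set.left_mem_Icc.mpr hle))
        linarith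
      · have hcongr : ∀ x ∈ uIcc cn dn, |Φ' x| = -Φ' x := by
          intro x hx
          rw [huIcc] at hx
          have hxI := hsubI hx
          apply abs_of_nonpos
          have h1 : u' x < 0 := hsig x hxI
          have h2 : 0 < u x ^ (1 / β - 1) := Real.rpow_pos_of_pos (hupos x hxI) _
          show u' x * (1 / β) * u x ^ (1 / β - 1) ≤ 0
          have h3 : u' x * (1 / β) ≤ 0 :=
            mul_nonpos_iff.mpr (Or.inr ⟨h1.le, by positivity⟩)
          exact mul_nonpos_iff.mpr (Or.inr ⟨h3, h2.le⟩)
        rw [intervalIntegral.integral_congr hcongr, intervalIntegral.integral_neg, hftc]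
        have := hΦ_lt cn hcnS
        have := hΦ_nn dn (hsubI (Set.right_mem_Icc.mpr hle))
        linarith
    -- put it together
    have hfin : ENNReal.ofReal (M : ℝ) * volume (A n) ≤ ENNReal.ofReal (T ^ (1 / β)) := by
      refine le_trans hstep2 ?_
      rw [hlint]
      exact ENNReal.ofReal_le_ofReal hIle
    have hMne : ENNReal.ofReal (M : ℝ) ≠ 0 := ne_of_gt (ENNReal.ofReal_pos.mpr hM0)
    have hMne' : ENNReal.ofReal (M : ℝ) ≠ ⊤ := ENNReal.ofReal_ne_top
    rw [ENNReal.ofReal_div_of_pos hM0]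
    rw [ENNReal.le_div_iff_mul_le (Or.inl hMne) (Or.inl hMne'), mul_comm]
    exact hfin
  -- final arithmetic
  have hY : T ^ (1 / β) / M ≤ (G ^ (1 / β) / M) ^ p := by
    have he2 : (1 / β) * p = p - 1 := by rw [mul_comm]; exact he
    have hA' : T ^ (1 / β) = (G / (β * M)) ^ (p - 1) := by
      rw [hTdef, ← Real.rpow_mul (by positivity), he]
    have hB' : G / (β * M) ≤ G / M :=
      div_le_div_of_nonneg_left hGnn hM0 (by nlinarith)
    have hC' : T ^ (1 / β) ≤ (G / M) ^ (p - 1) := by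
      rw [hA']
      exact Real.rpow_le_rpow (by positivity) hB' (by linarith)
    have hRHS : (G ^ (1 / β) / M) ^ p = G ^ (p - 1) / M ^ p := by
      rw [Real.div_rpow (Real.rpow_nonneg hGnn _) hM0.le,
        ← Real.rpow_mul hGnn, he2]
    rw [hRHS]
    calc T ^ (1 / β) / M ≤ (G / M) ^ (p - 1) / M :=
          (div_le_div_iff_of_pos_right hM0).mpr hC'
      _ = G ^ (p - 1) / M ^ p := by
          rw [Real.div_rpow hGnn hM0.le, div_div, ← Real.rpow_add_one hM0.ne',
            sub_add_cancel]
  have hfinal : (M : ℝ) * (T ^ (1 / β) / M) ^ (1 / p) ≤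
      1 * max (H ^ (1 / β) * (b - a) ^ (1 / p)) (G ^ (1 / β)) := by
    rw [one_mul]
    have h6 : (T ^ (1 / β) / M) ^ (1 / p) ≤ ((G ^ (1 / β) / M) ^ p) ^ (1 / p) :=
      Real.rpow_le_rpow (by positivity) hY hpinv0.le
    have h7 : ((G ^ (1 / β) / M) ^ p) ^ (1 / p) = G ^ (1 / β) / M := by
      rw [← Real.rpow_mul (by positivity), mul_one_div, div_self hp0.ne', Real.rpow_one]
    have h8 : (M : ℝ) * (T ^ (1 / β) / M) ^ (1 / p) ≤ G ^ (1 / β) := by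
      calc (M : ℝ) * (T ^ (1 / β) / M) ^ (1 / p) ≤ (M : ℝ) * (G ^ (1 / β) / M) := by
            rw [← h7]; exact mul_le_mul_of_nonneg_left h6 hM0.le
        _ = G ^ (1 / β) := by field_simp
    exact le_trans h8 (le_max_right _ _)
  calc (M : ℝ≥0∞) * volume E ^ (1 / p)
      ≤ (M : ℝ≥0∞) * (ENNReal.ofReal (T ^ (1 / β) / M)) ^ (1 / p) :=
        mul_le_mul_right (ENNReal.rpow_le_rpow key hpinv0.le) _
    _ = ENNReal.ofReal ((M : ℝ) * (T ^ (1 / β) / M) ^ (1 / p)) := by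
        rw [ENNReal.ofReal_rpow_of_nonneg (by positivity) hpinv0.le,
          ← ENNReal.ofReal_coe_nnreal, ← ENNReal.ofReal_mul hM0.le]
    _ ≤ ENNReal.ofReal (1 * max (H ^ (1 / β) * (b - a) ^ (1 / p)) (G ^ (1 / β))) :=
        ENNReal.ofReal_le_ofReal hfinal
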